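/- The Catalan number C_n = (1/(n+1))·binomial(2n,n) is odd if and only if n+1 is a power of 2. -/

import Mathlib

open Nat

private def s (m : ℕ) : ℕ := (Nat.digits 2 m).sum

private lemma s_zero : s 0 = 0 := by simp [s]

private lemma s_two_mul (m : ℕ) (hm : m ≠ 0) : s (2 * m) = s m := by
  unfold s
  rw [Nat.digits_def' (by norm_num : 1 < 2) (by omega)]
  simp [Nat.mul_div_cancel_left, Nat.mul_mod_right]

private lemma s_two_mul_add_one (m : ℕ) : s (2 * m + 1) = s m + 1 := by
  unfold s
  rw [Nat.digits_def' (by norm_num : 1 < 2) (by omega)]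
  have h1 : (2 * m + 1) % 2 = 1 := by omega
  have h2 : (2 * m + 1) / 2 = m := by omega
  rw [h1, h2]; simp [Nat.add_comm]

private lemma s_eq_zero (m : ℕ) (h : s m = 0) : m = 0 := by
  induction m using Nat.strong_induction_on with
  | _ m ih =>
    rcases Nat.even_or_odd m with ⟨k, hk⟩ | ⟨k, hk⟩
    · rcases Nat.eq_zero_or_pos k with rfl | hk0
      · omega
      · subst hk
        rw [show k + k = 2 * k by ring, s_two_mul k (by omega)] at h
        have := ih k (by omega) h
        omega
    · subst hk
      rw [s_two_mul_add_one] at h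
      omega

private lemma v2_succ_add_s (m : ℕ) (hm : m ≠ 0) :
    s (m - 1) + 1 = s m + padicValNat 2 m := by
  induction m using Nat.strong_induction_on with
  | _ m ih =>
    rcases Nat.even_or_odd m with ⟨k, hk⟩ | ⟨k, hk⟩
    · have hk0 : k ≠ 0 := by omega
      have hm2 : m = 2 * k := by omega
      rcases Nat.eq_zero_or_pos (k - 1) with h1 | h1
      · -- k = 1, m = 2
        have : m = 2 := by omega
        subst this
        norm_num [s, padicValNat.self]
      · have hv : padicValNat 2 m = padicValNat 2 k + 1 := by
          rw [hm2, padicValNat.mul (by norm_num) hk0, padicValNat.self (by norm_num)]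
          omega
        have hs : s m = s k := by rw [hm2, s_two_mul k hk0]
        have hsm1 : s (m - 1) = s (k - 1) + 1 := by
          have : m - 1 = 2 * (k - 1) + 1 := by omega
          rw [this, s_two_mul_add_one]
        have := ih k (by omega) hk0
        omega
    · have hm2 : m = 2 * k + 1 := by omega
      have hv : padicValNat 2 m = 0 := by
        rw [padicValNat.eq_zero_iff]
        right; right; omega
      have hs : s m = s k + 1 := by rw [hm2, s_two_mul_add_one]
      have hsm1 : s (m - 1) = s k := by
        rcases Nat.eq_zero_or_pos k with rfl | hk0
        · rw [show m - 1 = 0 by omega]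
        · have : m - 1 = 2 * k := by omega
          rw [this, s_two_mul k (by omega)]
      omega

private lemma s_pow_two (k : ℕ) : s (2 ^ k) = 1 := by
  induction k with
  | zero => simp [s]
  | succ k ih =>
    rw [pow_succ, mul_comm, s_two_mul _ (by positivity)]
    exact ih

private lemma s_eq_one (m : ℕ) (h : s m = 1) : ∃ k, m = 2 ^ k := by
  induction m using Nat.strong_induction_on with
  | _ m ih =>
    rcases Nat.even_or_odd m with ⟨k, hk⟩ | ⟨k, hk⟩
    · rcases Nat.eq_zero_or_pos k with rfl | hk0
      · rw [show m = 0 by omega, s_zero] at h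
        exact (by omega : False).elim
      · have hm2 : m = 2 * k := by omega
        rw [hm2, s_two_mul k (by omega)] at h
        obtain ⟨j, hj⟩ := ih k (by omega) h
        exact ⟨j + 1, by rw [hm2, hj]; ring⟩
    · have hm2 : m = 2 * k + 1 := by omega
      rw [hm2, s_two_mul_add_one] at h
      have : k = 0 := s_eq_zero k (by omega)
      exact ⟨0, by omega⟩

private lemma v2_centralBinom (n : ℕ) :
    padicValNat 2 (Nat.centralBinom n) = s n := by
  have : Fact (Nat.Prime 2) := ⟨Nat.prime_two⟩
  have h := sub_one_mul_padicValNat_choose_eq_sub_sum_digits' (p := 2) (k := n) (n := n)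
  rcases Nat.eq_zero_or_pos n with rfl | hn
  · simp [Nat.centralBinom, s]
  · have h2n : s (n + n) = s n := by
      rw [show n + n = 2 * n by ring, s_two_mul n (by omega)]
    unfold Nat.centralBinom
    rw [two_mul]
    have hle : s (n + n) ≤ s n + s n := by omega
    unfold s at *
    omega

theorem stmt1 (n : ℕ) : Odd (catalan n) ↔ ∃ k : ℕ, n + 1 = 2 ^ k := by
  have : Fact (Nat.Prime 2) := ⟨Nat.prime_two⟩
  have hc : (n + 1) * catalan n = Nat.centralBinom n := succ_mul_catalan_eq_centralBinom n
  have hcat : catalan n ≠ 0 := by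
    intro h
    have := Nat.centralBinom_pos n
    rw [← hc, h] at this
    omega
  have hmul : padicValNat 2 (n + 1) + padicValNat 2 (catalan n) = s n := by
    rw [← padicValNat.mul (by omega) hcat, hc, v2_centralBinom]
  have hkey := v2_succ_add_s (n + 1) (by omega)
  simp only [Nat.add_sub_cancel] at hkey
  -- s n + 1 = s (n+1) + padicValNat 2 (n+1)
  constructor
  · intro hodd
    have hodd' : catalan n % 2 = 1 := Nat.odd_iff.mp hodd
    have h0 : padicValNat 2 (catalan n) = 0 := by
      rw [padicValNat.eq_zero_iff]
      right; right
      omega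
    have : s (n + 1) = 1 := by omega
    exact s_eq_one _ this
  · rintro ⟨k, hk⟩
    have hs1 : s (n + 1) = 1 := by rw [hk]; exact s_pow_two k
    have h0 : padicValNat 2 (catalan n) = 0 := by omega
    rw [Nat.odd_iff]
    by_contra h
    have hdvd : 2 ∣ catalan n := by omega
    have := one_le_padicValNat_of_dvd hcat hdvd
    omega
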